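/- Let m ≥ 1 and let Ω ⊆ ℝ^m be a bounded open set. Let f₁, f₂ : ℝ^m × ℝ → ℝ be functions such that f₂(x,s)/s ≥ f₁(x,t)/t for every x ∈ ℝ^m and all reals 0 < s ≤ t. Let u, v be continuous on the closure of Ω and C² on Ω, with u ≥ 0 and v > 0 on the closure of Ω, satisfying Δu(x) + f₁(x, u(x)) ≥ 0 and Δv(x) + f₂(x, v(x)) ≤ 0 for all x ∈ Ω. If u ≤ v on the boundary ∂Ω, then u ≤ v on Ω. -/

import Mathlib

open Real Set

/-- The Euclidean Laplacian: trace of the Hessian. -/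
noncomputable def lap {m : ℕ} (u : EuclideanSpace ℝ (Fin m) → ℝ)
    (x : EuclideanSpace ℝ (Fin m)) : ℝ :=
  ∑ i : Fin m, iteratedFDeriv ℝ 2 u x ![EuclideanSpace.single i 1, EuclideanSpace.single i 1]

open Topology Filter

section helpers

lemma lap_add_smul {m : ℕ} {u v : EuclideanSpace ℝ (Fin m) → ℝ} {y : EuclideanSpace ℝ (Fin m)}
    (hu : ContDiffAt ℝ 2 u y) (hv : ContDiffAt ℝ 2 v y) (a : ℝ) :
    lap (fun x => u x + a * v x) y = lap u y + a * lap v y := by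
  have h2 : (2 : WithTop ℕ∞) ≠ (⊤ : ℕ∞) := by simp
  have hud : ∀ᶠ x in 𝓝 y, DifferentiableAt ℝ u x :=
    (hu.eventually h2).mono fun x hx => hx.differentiableAt two_ne_zero
  have hvd : ∀ᶠ x in 𝓝 y, DifferentiableAt ℝ v x :=
    (hv.eventually h2).mono fun x hx => hx.differentiableAt two_ne_zero
  have hkey : (fun x => fderiv ℝ (fun x => u x + a * v x) x) =ᶠ[𝓝 y]
      fun x => fderiv ℝ u x + a • fderiv ℝ v x := by
    filter_upwards [hud, hvd] with x hux hvx
    rw [fderiv_fun_add hux ((hvx.const_mul a)), fderiv_const_mul hvx a]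
  have h1 : DifferentiableAt ℝ (fderiv ℝ u) y :=
    (hu.fderiv_right (by norm_num : (1:WithTop ℕ∞) + 1 ≤ 2)).differentiableAt one_ne_zero
  have h1v : DifferentiableAt ℝ (fderiv ℝ v) y :=
    (hv.fderiv_right (by norm_num : (1:WithTop ℕ∞) + 1 ≤ 2)).differentiableAt one_ne_zero
  have hmain : fderiv ℝ (fderiv ℝ (fun x => u x + a * v x)) y
      = fderiv ℝ (fderiv ℝ u) y + a • fderiv ℝ (fderiv ℝ v) y := by
    rw [hkey.fderiv_eq, fderiv_fun_add (g := fun x => a • fderiv ℝ v x) h1 (h1v.const_smul a), fderiv_fun_const_smul h1v a]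
  unfold lap
  rw [Finset.mul_sum, ← Finset.sum_add_distrib]
  refine Finset.sum_congr rfl fun i _ => ?_
  rw [iteratedFDeriv_two_apply, iteratedFDeriv_two_apply, iteratedFDeriv_two_apply, hmain]
  simp

/-- 1D necessary second-order condition at a local max. -/
lemma second_deriv_nonpos_of_isLocalMax {p q : ℝ → ℝ} {a : ℝ}
    (hpq : ∀ᶠ t in 𝓝 (0:ℝ), HasDerivAt p (q t) t)
    (hq : HasDerivAt q a 0) (hmax : IsLocalMax p 0) : a ≤ 0 := by
  by_contra h
  push_neg at h
  have hq0 : q 0 = 0 := hmax.hasDerivAt_eq_zero hpq.self_of_nhds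
  have hslope : Tendsto (fun t => q t / t) (𝓝[>] (0:ℝ)) (𝓝 a) := by
    have h1 := hasDerivAt_iff_tendsto_slope.1 hq
    have h2 := h1.mono_left (nhdsWithin_mono _ (fun t ht => ne_of_gt ht : Ioi (0:ℝ) ⊆ {(0:ℝ)}ᶜ))
    have h3 : slope q 0 = fun t => q t / t := by
      funext t; rw [slope_def_field]; rw [hq0]; ring
    rwa [h3] at h2
  have hqpos : ∀ᶠ t in 𝓝[>] (0:ℝ), 0 < q t := by
    filter_upwards [hslope.eventually (eventually_gt_nhds (half_lt_self h)),
      self_mem_nhdsWithin] with t ht ht'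
    have h3 : 0 < q t / t := lt_trans (half_pos h) ht
    have h4 := mul_pos h3 (ht' : (0:ℝ) < t)
    rwa [div_mul_cancel₀ _ (ne_of_gt ht')] at h4
  have hall : ∀ᶠ t in 𝓝 (0:ℝ),
      (HasDerivAt p (q t) t ∧ p t ≤ p 0) ∧ (t ∈ Ioi (0:ℝ) → 0 < q t) := by
    have := eventually_nhdsWithin_iff.mp hqpos
    filter_upwards [hpq, hmax, this] with t h1 h2 h3
    exact ⟨⟨h1, h2⟩, h3⟩
  rw [Metric.eventually_nhds_iff] at hall
  obtain ⟨ε, hε, hE⟩ := hall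
  set r := ε / 2 with hr
  have hrpos : 0 < r := half_pos hε
  have hmem : ∀ t ∈ Icc (0:ℝ) r, dist t 0 < ε := by
    intro t ht
    rw [Real.dist_eq, sub_zero, abs_of_nonneg ht.1]
    exact lt_of_le_of_lt ht.2 (half_lt_self hε)
  have hcont : ContinuousOn p (Icc 0 r) := fun t ht =>
    ((hE (hmem t ht)).1.1.continuousAt).continuousWithinAt
  have hderiv : ∀ t ∈ interior (Icc (0:ℝ) r), 0 < deriv p t := by
    intro t ht
    rw [interior_Icc] at ht
    have h5 := hE (hmem t ⟨le_of_lt ht.1, le_of_lt ht.2⟩)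
    rw [h5.1.1.deriv]
    exact h5.2 ht.1
  have hmono := strictMonoOn_of_deriv_pos (convex_Icc 0 r) hcont hderiv
  have h6 : p 0 < p r :=
    hmono (left_mem_Icc.2 (le_of_lt hrpos)) (right_mem_Icc.2 (le_of_lt hrpos)) hrpos
  exact absurd h6 (not_lt.2 (hE (hmem r (right_mem_Icc.2 (le_of_lt hrpos)))).1.2)

lemma lap_nonpos_of_isLocalMax {m : ℕ} {g : EuclideanSpace ℝ (Fin m) → ℝ}
    {y : EuclideanSpace ℝ (Fin m)} (hg : ContDiffAt ℝ 2 g y) (hmax : IsLocalMax g y) :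
    lap g y ≤ 0 := by
  have h2 : (2 : WithTop ℕ∞) ≠ (⊤ : ℕ∞) := by simp
  refine Finset.sum_nonpos fun i _ => ?_
  set e : EuclideanSpace ℝ (Fin m) := EuclideanSpace.single i 1 with he
  rw [iteratedFDeriv_two_apply]
  have hline : ∀ t : ℝ, HasDerivAt (fun s : ℝ => y + s • e) e t := by
    intro t
    simpa using ((hasDerivAt_id t).smul_const e).const_add y
  have hcl : Continuous (fun s : ℝ => y + s • e) := by continuity
  have hy0 : y + (0:ℝ) • e = y := by simp
  set p : ℝ → ℝ := fun t => g (y + t • e) with hp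
  set q : ℝ → ℝ := fun t => fderiv ℝ g (y + t • e) e with hq
  have hpq : ∀ᶠ t in 𝓝 (0:ℝ), HasDerivAt p (q t) t := by
    have hev : ∀ᶠ x in 𝓝 y, DifferentiableAt ℝ g x :=
      (hg.eventually h2).mono fun x hx => hx.differentiableAt two_ne_zero
    have : ∀ᶠ t in 𝓝 (0:ℝ), DifferentiableAt ℝ g (y + t • e) := by
      have hc : ContinuousAt (fun s : ℝ => y + s • e) 0 := hcl.continuousAt
      have := hc.preimage_mem_nhds (by rw [hy0] at *; exact hev)
      · exact eventually_of_mem this fun t ht => ht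
    filter_upwards [this] with t ht
    exact ht.hasFDerivAt.comp_hasDerivAt t (hline t)
  have hqd : HasDerivAt q (fderiv ℝ (fderiv ℝ g) y e e) 0 := by
    have hdf : DifferentiableAt ℝ (fderiv ℝ g) y :=
      (hg.fderiv_right (by norm_num : (1:WithTop ℕ∞) + 1 ≤ 2)).differentiableAt one_ne_zero
    have h1 : HasDerivAt (fun t : ℝ => fderiv ℝ g (y + t • e)) (fderiv ℝ (fderiv ℝ g) y e) 0 := by
      have hdf' : HasFDerivAt (fderiv ℝ g) (fderiv ℝ (fderiv ℝ g) y) (y + (0:ℝ) • e) := by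
        rw [hy0]; exact hdf.hasFDerivAt
      exact hdf'.comp_hasDerivAt 0 (hline 0)
    exact ((ContinuousLinearMap.apply ℝ ℝ e).hasFDerivAt.comp_hasDerivAt 0 h1 :)
  have hpm : IsLocalMax p 0 := by
    have hc : ContinuousAt (fun s : ℝ => y + s • e) 0 := hcl.continuousAt
    have := hc.preimage_mem_nhds (by rw [hy0]; exact hmax)
    exact eventually_of_mem this fun t ht => by
      simpa [hp, hy0] using ht
  have := second_deriv_nonpos_of_isLocalMax hpq hqd hpm
  simpa using this

section exp_lemma
variable {m : ℕ} (i₀ : Fin m) (l : ℝ)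

noncomputable def expc (x : EuclideanSpace ℝ (Fin m)) : ℝ := Real.exp (l * x i₀)

lemma expc_contDiff : ContDiff ℝ 2 (expc i₀ l) := by
  have : ContDiff ℝ 2 (fun x : EuclideanSpace ℝ (Fin m) => l * (EuclideanSpace.proj i₀) x) :=
    contDiff_const.mul (EuclideanSpace.proj (𝕜 := ℝ) i₀).contDiff
  exact (Real.contDiff_exp.of_le le_top).comp this

lemma expc_pos (x : EuclideanSpace ℝ (Fin m)) : 0 < expc i₀ l x := Real.exp_pos _

lemma expc_hasFDerivAt (x : EuclideanSpace ℝ (Fin m)) :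
    HasFDerivAt (expc i₀ l) ((l * expc i₀ l x) • (EuclideanSpace.proj i₀ :
      EuclideanSpace ℝ (Fin m) →L[ℝ] ℝ)) x := by
  set P : EuclideanSpace ℝ (Fin m) →L[ℝ] ℝ := EuclideanSpace.proj i₀ with hP
  have h1 : HasFDerivAt (fun x : EuclideanSpace ℝ (Fin m) => l * P x) (l • P) x := by
    exact (P.hasFDerivAt (x := x)).const_mul l
  have h2 := (Real.hasDerivAt_exp (l * P x)).comp_hasFDerivAt x h1
  have h3 : expc i₀ l = fun x => Real.exp (l * P x) := rfl
  rw [h3]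
  refine h2.congr_fderiv ?_
  rw [smul_smul]
  ring_nf

lemma lap_expc (x : EuclideanSpace ℝ (Fin m)) :
    lap (expc i₀ l) x = l ^ 2 * expc i₀ l x := by
  set P : EuclideanSpace ℝ (Fin m) →L[ℝ] ℝ := EuclideanSpace.proj i₀ with hP
  set S : ℝ →L[ℝ] (EuclideanSpace ℝ (Fin m) →L[ℝ] ℝ) :=
    (ContinuousLinearMap.id ℝ ℝ).smulRight P with hS
  have hfd : fderiv ℝ (expc i₀ l) = fun y => (l * expc i₀ l y) • P :=
    funext fun y => (expc_hasFDerivAt i₀ l y).fderiv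
  have hc : ∀ y, HasFDerivAt (fun y => l * expc i₀ l y)
      ((l * (l * expc i₀ l y)) • P) y := by
    intro y
    have := (expc_hasFDerivAt i₀ l y).const_mul l
    exact this.congr_fderiv (by rw [smul_smul])
  have hΦ : ∀ y, HasFDerivAt (fderiv ℝ (expc i₀ l))
      (S.comp ((l * (l * expc i₀ l y)) • P)) y := by
    intro y
    rw [hfd]
    exact (S.hasFDerivAt).comp y (hc y)
  have h2 : ∀ y (e e' : EuclideanSpace ℝ (Fin m)),
      fderiv ℝ (fderiv ℝ (expc i₀ l)) y e e' = (l * (l * expc i₀ l y)) * (P e) * (P e') := by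
    intro y e e'
    rw [(hΦ y).fderiv]
    simp [hS, ContinuousLinearMap.smulRight_apply, smul_smul]
  unfold lap
  have h3 : ∀ i : Fin m, iteratedFDeriv ℝ 2 (expc i₀ l) x
      ![EuclideanSpace.single i 1, EuclideanSpace.single i 1]
      = (l * (l * expc i₀ l x)) * (P (EuclideanSpace.single i 1))
        * (P (EuclideanSpace.single i 1)) := by
    intro i
    rw [iteratedFDeriv_two_apply]
    simpa using h2 x (EuclideanSpace.single i 1) (EuclideanSpace.single i 1)
  rw [Finset.sum_congr rfl fun i _ => h3 i]
  have h4 : ∀ i : Fin m, P (EuclideanSpace.single i 1) = if i₀ = i then (1:ℝ) else 0 := by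
    intro i
    simp [hP, EuclideanSpace.single_apply]
  rw [Finset.sum_congr rfl fun i _ => by rw [h4 i]]
  rw [Finset.sum_eq_single i₀]
  · simp; ring
  · intro b _ hb
    simp [Ne.symm hb]
  · intro h; exact absurd (Finset.mem_univ i₀) h
end exp_lemma

lemma lap_continuousOn {m : ℕ} {Ω : Set (EuclideanSpace ℝ (Fin m))}
    {u : EuclideanSpace ℝ (Fin m) → ℝ} (h : ContDiffOn ℝ 2 u Ω) (hΩo : IsOpen Ω) :
    ContinuousOn (lap u) Ω := by
  have hbase : ContinuousOn (fun x => iteratedFDeriv ℝ 2 u x) Ω := by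
    have h1 := h.continuousOn_iteratedFDerivWithin (m := 2) le_rfl hΩo.uniqueDiffOn
    exact h1.congr fun x hx => (iteratedFDerivWithin_of_isOpen 2 hΩo hx).symm
  apply continuousOn_finset_sum
  intro i _
  exact (continuous_eval_const
    ![EuclideanSpace.single i 1, EuclideanSpace.single i 1]).comp_continuousOn hbase

end helpers

set_option maxHeartbeats 1600000 in
/-- Comparison lemma on a bounded domain for sub- and supersolutions of
`Δu + f(x,u) = 0` with a monotone nonlinearity quotient. -/
theorem comparison_on_bounded_domain {m : ℕ} (hm : 1 ≤ m)
    (Ω : Set (EuclideanSpace ℝ (Fin m))) (hΩo : IsOpen Ω) (hΩb : Bornology.IsBounded Ω)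
    (f₁ f₂ : EuclideanSpace ℝ (Fin m) → ℝ → ℝ)
    (hf : ∀ x (s t : ℝ), 0 < s → s ≤ t → f₁ x t / t ≤ f₂ x s / s)
    (u v : EuclideanSpace ℝ (Fin m) → ℝ)
    (hucont : ContinuousOn u (closure Ω)) (hvcont : ContinuousOn v (closure Ω))
    (huC2 : ContDiffOn ℝ 2 u Ω) (hvC2 : ContDiffOn ℝ 2 v Ω)
    (hu0 : ∀ x ∈ closure Ω, 0 ≤ u x) (hv0 : ∀ x ∈ closure Ω, 0 < v x)
    (hsub : ∀ x ∈ Ω, 0 ≤ lap u x + f₁ x (u x))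
    (hsup : ∀ x ∈ Ω, lap v x + f₂ x (v x) ≤ 0)
    (hbdry : ∀ x ∈ frontier Ω, u x ≤ v x) :
    ∀ x ∈ Ω, u x ≤ v x := by
  by_contra hcon
  push_neg at hcon
  obtain ⟨x₁, hx₁Ω, hx₁⟩ := hcon
  haveI : Nonempty (Fin m) := ⟨⟨0, hm⟩⟩
  set K := closure Ω with hK
  have hKcpt : IsCompact K := hΩb.isCompact_closure
  have hx₁K : x₁ ∈ K := subset_closure hx₁Ω
  have hψcont : ContinuousOn (fun x => u x / v x) K :=
    hucont.div hvcont fun x hx => (hv0 x hx).ne'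
  obtain ⟨z, hzK, hzmax⟩ := hKcpt.exists_isMaxOn ⟨x₁, hx₁K⟩ hψcont
  set θ := u z / v z with hθ
  clear_value θ
  have hθ1 : 1 < θ := by
    have h1 : (1:ℝ) < u x₁ / v x₁ := (one_lt_div (hv0 x₁ hx₁K)).2 hx₁
    rw [hθ]
    exact lt_of_lt_of_le h1 (hzmax hx₁K)
  have huleθv : ∀ x ∈ K, u x ≤ θ * v x := by
    intro x hx
    have h : u x / v x ≤ θ := by rw [hθ]; exact hzmax hx
    have h2 := (div_le_iff₀ (hv0 x hx)).1 h
    linarith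
  have hzΩ : z ∈ Ω := by
    by_contra h
    have hzf : z ∈ frontier Ω := by
      rw [frontier, hΩo.interior_eq]; exact ⟨hzK, h⟩
    have h1 : θ ≤ 1 := by
      rw [hθ]; exact (div_le_one (hv0 z hzK)).2 (hbdry z hzf)
    linarith
  have huz : u z = θ * v z := by
    rw [hθ, div_mul_cancel₀ _ (hv0 z hzK).ne']
  set θ' := (1 + θ) / 2 with hθ'
  clear_value θ'
  have h1θ' : 1 < θ' := by rw [hθ']; linarith
  have hθ'θ : θ' < θ := by rw [hθ']; linarith
  -- the open set V where u > θ' v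
  set V := {x | x ∈ Ω ∧ θ' * v x < u x} with hV
  have hVo : IsOpen V := by
    have h1 : V = Ω ∩ (fun x => u x - θ' * v x) ⁻¹' Ioi 0 := by
      ext x; simp [hV, sub_pos]
    rw [h1]
    exact (huC2.continuousOn.sub (continuousOn_const.mul hvC2.continuousOn)).isOpen_inter_preimage
      hΩo isOpen_Ioi
  have hzV : z ∈ V := by
    refine ⟨hzΩ, ?_⟩
    rw [huz]
    exact mul_lt_mul_of_pos_right hθ'θ (hv0 z hzK)
  have hVΩ : V ⊆ Ω := fun x hx => hx.1
  -- closure V is a compact subset of Ω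
  have hclVK : closure V ⊆ K := closure_mono hVΩ
  have hclVle : ∀ x ∈ closure V, θ' * v x ≤ u x := by
    have hCclosed : IsClosed (K ∩ (fun x => u x - θ' * v x) ⁻¹' Ici 0) :=
      (hucont.sub (continuousOn_const.mul hvcont)).preimage_isClosed_of_isClosed
        isClosed_closure isClosed_Ici
    have hsubC : V ⊆ K ∩ (fun x => u x - θ' * v x) ⁻¹' Ici 0 := by
      intro x hx
      exact ⟨subset_closure (hVΩ hx), by simpa [sub_nonneg] using le_of_lt hx.2⟩
    have := closure_minimal hsubC hCclosed
    intro x hx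
    have h2 := this hx
    simpa [sub_nonneg] using h2.2
  have hclVΩ : closure V ⊆ Ω := by
    intro x hx
    by_contra h
    have hxf : x ∈ frontier Ω := by
      rw [frontier, hΩo.interior_eq]; exact ⟨hclVK hx, h⟩
    have h1 : u x ≤ v x := hbdry x hxf
    have h2 : v x < θ' * v x := by
      nlinarith [hv0 x (hclVK hx)]
    have := hclVle x hx
    linarith
  have hclVcpt : IsCompact (closure V) :=
    hKcpt.of_isClosed_subset isClosed_closure hclVK
  -- the function w = u - θ v
  set w := fun x => u x + (-θ) * v x with hw
  clear_value w
  have hw0 : ∀ x ∈ K, w x ≤ 0 := by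
    intro x hx
    have := huleθv x hx
    rw [hw]; dsimp only; linarith
  have hwz : w z = 0 := by rw [hw]; dsimp only; rw [huz]; ring
  have hwcont : ContinuousOn w K := by
    rw [hw]; exact hucont.add (continuousOn_const.mul hvcont)
  -- frontier of V
  have hfrVclV : frontier V ⊆ closure V := frontier_subset_closure
  have hfrVcpt : IsCompact (frontier V) :=
    hclVcpt.of_isClosed_subset isClosed_frontier hfrVclV
  have hfrVneg : ∀ x ∈ frontier V, w x < 0 := by
    intro x hx
    have hxΩ : x ∈ Ω := hclVΩ (hfrVclV hx)
    have hxK : x ∈ K := subset_closure hxΩ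
    have hxnV : x ∉ V := by
      rw [hVo.frontier_eq] at hx; exact hx.2
    have h1 : u x ≤ θ' * v x := by
      by_contra h
      exact hxnV ⟨hxΩ, lt_of_not_ge h⟩
    have h2 : 0 < v x := hv0 x hxK
    rw [hw]; dsimp only
    nlinarith
  have hfrVne : (frontier V).Nonempty := by
    by_contra h
    rw [not_nonempty_iff_eq_empty] at h
    rcases frontier_eq_empty_iff.mp h with h1 | h1
    · rw [h1] at hzV; exact hzV
    · have hΩuniv : Ω = univ := eq_univ_of_univ_subset (h1 ▸ hVΩ)
      rw [hΩuniv] at hΩb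
      exact NormedSpace.unbounded_univ ℝ (EuclideanSpace ℝ (Fin m)) hΩb
  obtain ⟨xf, hxf, hxfmax⟩ := hfrVcpt.exists_isMaxOn hfrVne
    (hwcont.mono (hfrVclV.trans hclVK))
  set δ := -(w xf) with hδ
  clear_value δ
  have hδpos : 0 < δ := by
    rw [hδ]; linarith [hfrVneg xf hxf]
  have hfrVδ : ∀ x ∈ frontier V, w x ≤ -δ := fun x hx => by
    rw [hδ]; simpa using hxfmax hx
  -- bounds on lap u, lap v, v on closure V
  obtain ⟨C₁, hC₁⟩ := hclVcpt.exists_bound_of_continuousOn ((lap_continuousOn huC2 hΩo).mono hclVΩ)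
  obtain ⟨C₂, hC₂⟩ := hclVcpt.exists_bound_of_continuousOn ((lap_continuousOn hvC2 hΩo).mono hclVΩ)
  set C := max C₁ C₂ with hC
  clear_value C
  have hzclV : z ∈ closure V := subset_closure hzV
  have hC0 : 0 ≤ C := by
    rw [hC]
    exact le_trans (norm_nonneg _) (le_trans (hC₁ z hzclV) (le_max_left _ _))
  have hCu : ∀ x ∈ closure V, |lap u x| ≤ C := fun x hx => by
    rw [hC]; exact le_trans (hC₁ x hx) (le_max_left _ _)
  have hCv : ∀ x ∈ closure V, |lap v x| ≤ C := fun x hx => by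
    rw [hC]; exact le_trans (hC₂ x hx) (le_max_right _ _)
  obtain ⟨xm, hxm, hxmmin⟩ := hclVcpt.exists_isMinOn ⟨z, hzclV⟩ (hvcont.mono hclVK)
  set vmin := v xm with hvmin
  clear_value vmin
  have hvminpos : 0 < vmin := by rw [hvmin]; exact hv0 xm (hclVK hxm)
  have hvminle : ∀ x ∈ closure V, vmin ≤ v x := fun x hx => by
    rw [hvmin]; exact hxmmin hx
  set M := C / vmin with hM
  clear_value M
  have hM0 : 0 ≤ M := by
    rw [hM]; exact div_nonneg hC0 (le_of_lt hvminpos)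
  have hMvmin : M * vmin = C := by
    rw [hM]; exact div_mul_cancel₀ _ (ne_of_gt hvminpos)
  -- the key differential inequality on V
  have hkey : ∀ y ∈ V, M * w y ≤ lap u y + (-θ) * lap v y := by
    intro y hyV
    have hyΩ : y ∈ Ω := hyV.1
    have hyK : y ∈ K := subset_closure hyΩ
    have hyclV : y ∈ closure V := subset_closure hyV
    have hvy : 0 < v y := hv0 y hyK
    have hvu : v y < u y := by nlinarith [hyV.2]
    have huy : 0 < u y := lt_trans hvy hvu
    have h1 : f₁ y (u y) / u y ≤ f₂ y (v y) / v y := hf y (v y) (u y) hvy (le_of_lt hvu)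
    have hsub' := hsub y hyΩ
    have hsup' := hsup y hyΩ
    have hCuy : |lap u y| ≤ C := hCu y hyclV
    have hCvy : |lap v y| ≤ C := hCv y hyclV
    have hwyd : w y = u y + (-θ) * v y := by rw [hw]
    set A := f₁ y (u y) with hA
    set B := f₂ y (v y) with hB
    set Lu := lap u y with hLu
    set Lv := lap v y with hLv
    clear_value A B Lu Lv
    have h1' : A * v y ≤ B * u y := by
      rw [div_le_div_iff₀ huy hvy] at h1; exact h1
    have h2 : -Lu ≤ A := by linarith
    have h3 : B ≤ -Lv := by linarith
    have habs_u : -C ≤ Lu ∧ Lu ≤ C := abs_le.mp hCuy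
    have habs_v : -C ≤ Lv ∧ Lv ≤ C := abs_le.mp hCvy
    -- lower bound on B = f₂ y (v y)
    have hflow : -C ≤ B := by
      rcases le_or_gt 0 B with h4 | h4
      · linarith
      · have hf1neg : A < 0 := by nlinarith
        have h5 : A * u y ≤ A * v y :=
          mul_le_mul_of_nonpos_left (le_of_lt hvu) (le_of_lt hf1neg)
        have h6 : -C ≤ A := by linarith
        nlinarith
    have hwy : w y ≤ 0 := hw0 y hyK
    -- step 1
    have step1 : (θ * v y - u y) * B ≤ (Lu + (-θ) * Lv) * v y := by
      have hθB : θ * B ≤ θ * (-Lv) := mul_le_mul_of_nonneg_left h3 (by linarith)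
      have ha : -A + θ * B ≤ Lu + (-θ) * Lv := by linarith
      have hb : (-A + θ * B) * v y ≤ (Lu + (-θ) * Lv) * v y :=
        mul_le_mul_of_nonneg_right ha (le_of_lt hvy)
      nlinarith [h1', hb]
    -- step 2
    have step2 : M * w y * v y ≤ (θ * v y - u y) * B := by
      have hwid : θ * v y - u y = -(w y) := by rw [hwyd]; ring
      rw [hwid]
      have e1 : (-(w y)) * (-C) ≤ (-(w y)) * B :=
        mul_le_mul_of_nonneg_left hflow (by linarith)
      have e2 : w y * v y ≤ w y * vmin :=
        mul_le_mul_of_nonpos_left (hvminle y hyclV) hwy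
      have e3 : M * (w y * v y) ≤ M * (w y * vmin) := mul_le_mul_of_nonneg_left e2 hM0
      have e4 : M * (w y * vmin) = C * w y := by rw [← hMvmin]; ring
      nlinarith [e1, e3, e4]
    have step3 := le_trans step2 step1
    exact le_of_mul_le_mul_right (by linarith [step3]) hvy
  -- the exponential perturbation
  set i₀ : Fin m := ⟨0, hm⟩ with hi₀
  set l := Real.sqrt (M + 1) with hl
  have hl2 : l ^ 2 = M + 1 := by
    rw [hl]; exact Real.sq_sqrt (by linarith)
  set φ := expc i₀ l with hφ
  have hφpos : ∀ x, 0 < φ x := fun x => by rw [hφ]; exact expc_pos i₀ l x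
  have hφcont : Continuous φ := by rw [hφ]; exact (expc_contDiff i₀ l).continuous
  have hφlap : ∀ x, lap φ x = (M + 1) * φ x := by
    intro x
    rw [hφ, lap_expc i₀ l x, hl2]
  have hφC2 : ContDiff ℝ 2 φ := by rw [hφ]; exact expc_contDiff i₀ l
  clear_value l φ
  obtain ⟨Cφ, hCφ⟩ := hclVcpt.exists_bound_of_continuousOn hφcont.continuousOn
  have hzclV : z ∈ closure V := subset_closure hzV
  have hCφpos : 0 < Cφ := lt_of_lt_of_le (hφpos z) (le_trans (le_abs_self _) (hCφ z hzclV))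
  have hφle : ∀ x ∈ closure V, φ x ≤ Cφ := fun x hx =>
    le_trans (le_abs_self _) (hCφ x hx)
  set ε := δ / (2 * Cφ) with hε
  clear_value ε
  have hεpos : 0 < ε := by
    rw [hε]; exact div_pos hδpos (by linarith)
  have hεCφ : ε * Cφ = δ / 2 := by
    rw [hε]; field_simp
  -- the perturbed function and its max
  set W := fun x => w x + ε * φ x with hW
  clear_value W
  have hWcont : ContinuousOn W (closure V) := by
    rw [hW]
    exact (hwcont.mono hclVK).add (continuousOn_const.mul hφcont.continuousOn)
  obtain ⟨y, hyclV, hymax⟩ := hclVcpt.exists_isMaxOn ⟨z, hzclV⟩ hWcont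
  have hWapp : ∀ x, W x = w x + ε * φ x := fun x => by rw [hW]
  have hWz : W z = ε * φ z := by rw [hWapp z, hwz]; ring
  have hWzpos : 0 < W z := by rw [hWz]; exact mul_pos hεpos (hφpos z)
  have hWyz : W z ≤ W y := hymax hzclV
  have hynfr : y ∉ frontier V := by
    intro hyfr
    have h1 : w y ≤ -δ := hfrVδ y hyfr
    have h2 : φ y ≤ Cφ := hφle y hyclV
    have h3 : W y ≤ -δ + ε * Cφ := by
      rw [hWapp y]
      have := mul_le_mul_of_nonneg_left h2 (le_of_lt hεpos)
      linarith
    rw [hεCφ] at h3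
    linarith
  have hyV : y ∈ V := by
    by_contra h
    exact hynfr (by rw [hVo.frontier_eq]; exact ⟨hyclV, h⟩)
  have hyΩ : y ∈ Ω := hVΩ hyV
  -- local max
  have hloc : IsLocalMax W y := by
    have hnhds : closure V ∈ 𝓝 y := mem_of_superset (hVo.mem_nhds hyV) subset_closure
    exact eventually_of_mem hnhds fun x hx => hymax hx
  -- smoothness at y
  have huAt : ContDiffAt ℝ 2 u y := huC2.contDiffAt (hΩo.mem_nhds hyΩ)
  have hvAt : ContDiffAt ℝ 2 v y := hvC2.contDiffAt (hΩo.mem_nhds hyΩ)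
  have hφAt : ContDiffAt ℝ 2 φ y := hφC2.contDiffAt
  have hwAt : ContDiffAt ℝ 2 w y := by
    rw [hw]; exact huAt.add (contDiffAt_const.mul hvAt)
  have hWAt : ContDiffAt ℝ 2 W y := by
    rw [hW]; exact hwAt.add (contDiffAt_const.mul hφAt)
  -- Laplacian computations
  have hlapW : lap W y = lap u y + (-θ) * lap v y + ε * ((M + 1) * φ y) := by
    have h1 : lap W y = lap w y + ε * lap φ y := by
      rw [hW]; exact lap_add_smul hwAt hφAt ε
    have h2 : lap w y = lap u y + (-θ) * lap v y := by
      rw [hw]; exact lap_add_smul huAt hvAt (-θ)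
    rw [h1, h2, hφlap y]
  have hlapW0 : lap W y ≤ 0 := lap_nonpos_of_isLocalMax hWAt hloc
  -- lower bound on w y from maximality
  have hwylb : ε * (φ z - φ y) ≤ w y := by
    have h1 : W z ≤ W y := hWyz
    rw [hWapp z, hWapp y, hwz] at h1
    linarith
  -- final contradiction
  have hMwy : M * (ε * (φ z - φ y)) ≤ M * w y := mul_le_mul_of_nonneg_left hwylb hM0
  have hkeyy := hkey y hyV
  have hfinal : 0 < lap W y := by
    rw [hlapW]
    have h1 : 0 ≤ M * ε * φ z := mul_nonneg (mul_nonneg hM0 (le_of_lt hεpos)) (le_of_lt (hφpos z))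
    have h2 : 0 < ε * φ y := mul_pos hεpos (hφpos y)
    nlinarith [hMwy, hkeyy, h1, h2]
  linarith
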